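/- (Uniform Hessian deviation bound used in the matrix sensing application.) Let Y and M be N×N real symmetric matrices and set Δ = Y − M. Then for every X ∈ St(N,r) and every U ∈ ℝ^{N×r} with ‖U‖_F ≤ 1, |hess f(X)[U,U] − hess g(X)[U,U]| = |⟨Xᵀ Δ X, Uᵀ U N_r⟩ − ⟨Δ, U N_r Uᵀ⟩| ≤ 2 r^{3/2} ‖Y − M‖, where ‖·‖ denotes the spectral norm. -/

import Mathlib

open Matrix

/-- The diagonal weight matrix `N_r = diag(r, r−1, …, 1)`. -/
noncomputable def Nr (r : ℕ) : Matrix (Fin r) (Fin r) ℝ :=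
  Matrix.diagonal fun j => (r : ℝ) - (j : ℕ)

/-- The trace inner product `⟨A, B⟩ = ∑_{ij} A_{ij} B_{ij}`. -/
def tip {m n : ℕ} (A B : Matrix (Fin m) (Fin n) ℝ) : ℝ :=
  ∑ i, ∑ j, A i j * B i j

/-- The spectral norm (ℓ₂ operator norm) of a square matrix. -/
noncomputable def spec {N : ℕ} (A : Matrix (Fin N) (Fin N) ℝ) : ℝ :=
  ‖LinearMap.toContinuousLinearMap (Matrix.toEuclideanLin A)‖

def frob2 {m n : ℕ} (A : Matrix (Fin m) (Fin n) ℝ) : ℝ := ∑ i, ∑ j, A i j ^ 2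

lemma frob2_nonneg {m n : ℕ} (A : Matrix (Fin m) (Fin n) ℝ) : 0 ≤ frob2 A :=
  Finset.sum_nonneg fun _ _ => Finset.sum_nonneg fun _ _ => sq_nonneg _

lemma tip_self {m n : ℕ} (A : Matrix (Fin m) (Fin n) ℝ) : tip A A = frob2 A := by
  simp [tip, frob2, sq]

lemma tip_comm {m n : ℕ} (A B : Matrix (Fin m) (Fin n) ℝ) : tip A B = tip B A := by
  simp [tip, mul_comm]

lemma tip_sub_left {m n : ℕ} (A B C : Matrix (Fin m) (Fin n) ℝ) :
    tip (A - B) C = tip A C - tip B C := by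
  simp [tip, Matrix.sub_apply, sub_mul, Finset.sum_sub_distrib]

lemma tip_prod {m n : ℕ} (A B : Matrix (Fin m) (Fin n) ℝ) :
    tip A B = ∑ p : Fin m × Fin n, A p.1 p.2 * B p.1 p.2 := by
  rw [tip, ← Finset.sum_product']
  rfl

lemma tip_sq_le {m n : ℕ} (A B : Matrix (Fin m) (Fin n) ℝ) :
    (tip A B) ^ 2 ≤ frob2 A * frob2 B := by
  have h := Finset.sum_mul_sq_le_sq_mul_sq (Finset.univ : Finset (Fin m × Fin n))
    (fun p => A p.1 p.2) (fun p => B p.1 p.2)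
  rw [tip_prod]
  calc (∑ p : Fin m × Fin n, A p.1 p.2 * B p.1 p.2) ^ 2
      ≤ (∑ p : Fin m × Fin n, A p.1 p.2 ^ 2) * ∑ p : Fin m × Fin n, B p.1 p.2 ^ 2 := h
    _ = frob2 A * frob2 B := by
        rw [frob2, frob2, ← Finset.sum_product', ← Finset.sum_product']; rfl

lemma abs_tip_le {m n : ℕ} (A B : Matrix (Fin m) (Fin n) ℝ) :
    |tip A B| ≤ Real.sqrt (frob2 A) * Real.sqrt (frob2 B) := by
  rw [← Real.sqrt_mul_self (abs_nonneg (tip A B)), ← abs_mul_abs_self, ← sq,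
    ← Real.sqrt_mul (frob2_nonneg A)]
  exact Real.sqrt_le_sqrt (by simpa using tip_sq_le A B)

lemma frob2_transpose {m n : ℕ} (A : Matrix (Fin m) (Fin n) ℝ) : frob2 Aᵀ = frob2 A := by
  rw [frob2, Finset.sum_comm]; rfl

lemma tip_eq_trace {m n : ℕ} (A B : Matrix (Fin m) (Fin n) ℝ) :
    tip A B = Matrix.trace (Aᵀ * B) := by
  rw [tip, Finset.sum_comm]
  simp [Matrix.trace, Matrix.mul_apply, Matrix.diag]

lemma tip_transpose_mul {m n k : ℕ} (X : Matrix (Fin m) (Fin n) ℝ)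
    (B : Matrix (Fin m) (Fin k) ℝ) (C : Matrix (Fin n) (Fin k) ℝ) :
    tip (Xᵀ * B) C = tip B (X * C) := by
  rw [tip_eq_trace, tip_eq_trace, Matrix.transpose_mul, Matrix.transpose_transpose,
    Matrix.mul_assoc]

lemma frob2_mul_le {m n k : ℕ} (A : Matrix (Fin m) (Fin n) ℝ) (B : Matrix (Fin n) (Fin k) ℝ) :
    frob2 (A * B) ≤ frob2 A * frob2 B := by
  have : ∀ i j, ((A * B) i j) ^ 2 ≤ (∑ l, A i l ^ 2) * (∑ l, B l j ^ 2) := fun i j => by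
    simpa [Matrix.mul_apply] using
      Finset.sum_mul_sq_le_sq_mul_sq Finset.univ (fun l => A i l) (fun l => B l j)
  calc frob2 (A * B) = ∑ i, ∑ j, ((A * B) i j) ^ 2 := rfl
    _ ≤ ∑ i, ∑ j, (∑ l, A i l ^ 2) * (∑ l, B l j ^ 2) := by
        refine Finset.sum_le_sum fun i _ => Finset.sum_le_sum fun j _ => this i j
    _ = frob2 A * frob2 B := by
        rw [frob2, frob2, Finset.sum_mul]
        refine Finset.sum_congr rfl fun i _ => ?_
        rw [← Finset.mul_sum]
        congr 1
        rw [Finset.sum_comm]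

lemma frob2_mul_isom {N r k : ℕ} (X : Matrix (Fin N) (Fin r) ℝ) (hX : Xᵀ * X = 1)
    (D : Matrix (Fin r) (Fin k) ℝ) : frob2 (X * D) = frob2 D := by
  rw [← tip_self, ← tip_self, ← tip_transpose_mul X (X*D) D, ← Matrix.mul_assoc,
    hX, Matrix.one_mul]

lemma frob2_transpose_mul_le {N r k : ℕ} (X : Matrix (Fin N) (Fin r) ℝ) (hX : Xᵀ * X = 1)
    (A : Matrix (Fin N) (Fin k) ℝ) : frob2 (Xᵀ * A) ≤ frob2 A := by
  set t := frob2 (Xᵀ * A) with ht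
  have h0 : 0 ≤ t := frob2_nonneg _
  have h1 : t ≤ Real.sqrt (frob2 A) * Real.sqrt t := by
    have := abs_tip_le A (X * (Xᵀ * A))
    rw [frob2_mul_isom X hX, ← tip_transpose_mul X A (Xᵀ * A), tip_self] at this
    calc t ≤ |t| := le_abs_self t
      _ ≤ _ := this
  have hsq : Real.sqrt t * Real.sqrt t = t := Real.mul_self_sqrt h0
  have hA : Real.sqrt (frob2 A) ^ 2 = frob2 A := Real.sq_sqrt (frob2_nonneg A)
  nlinarith [Real.sqrt_nonneg t, Real.sqrt_nonneg (frob2 A)]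

lemma frob2_mul_Nr {r k : ℕ} (A : Matrix (Fin k) (Fin r) ℝ) :
    frob2 (A * Nr r) ≤ (r : ℝ) ^ 2 * frob2 A := by
  have hent : ∀ (i : Fin k) (j : Fin r), ((A * Nr r) i j) ^ 2 ≤ (r:ℝ)^2 * A i j ^ 2 := by
    intro i j
    have : (A * Nr r) i j = A i j * ((r:ℝ) - (j:ℕ)) := by
      simp [Nr, Matrix.mul_apply, Matrix.diagonal, Finset.sum_ite_eq]
    rw [this, mul_pow]
    have hj : ((j:ℕ):ℝ) < r := by exact_mod_cast j.2
    have hj0 : (0:ℝ) ≤ ((j:ℕ):ℝ) := Nat.cast_nonneg _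
    have h3 : ((r:ℝ) - (j:ℕ))^2 ≤ (r:ℝ)^2 := by nlinarith
    nlinarith [sq_nonneg (A i j), h3]
  calc frob2 (A * Nr r) ≤ ∑ i, ∑ j, (r:ℝ)^2 * A i j ^ 2 :=
        Finset.sum_le_sum fun i _ => Finset.sum_le_sum fun j _ => hent i j
    _ = (r:ℝ)^2 * frob2 A := by rw [frob2, Finset.mul_sum]; simp [Finset.mul_sum]

lemma frob2_Nr (r : ℕ) : frob2 (Nr r) ≤ (r : ℝ) ^ 3 := by
  have : frob2 (Nr r) = ∑ j : Fin r, ((r:ℝ) - (j:ℕ)) ^ 2 := by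
    rw [frob2]
    rw [Finset.sum_comm]
    refine Finset.sum_congr rfl fun j _ => ?_
    rw [Finset.sum_eq_single j]
    · simp [Nr, Matrix.diagonal]
    · intro i _ hij
      have : Nr r i j = 0 := Matrix.diagonal_apply_ne _ hij
      rw [this]; ring
    · simp
  rw [this]
  calc ∑ j : Fin r, ((r:ℝ) - (j:ℕ)) ^ 2 ≤ ∑ _j : Fin r, (r:ℝ)^2 := by
        refine Finset.sum_le_sum fun j _ => ?_
        have hj : ((j:ℕ):ℝ) < r := by exact_mod_cast j.2
        have hj0 : (0:ℝ) ≤ ((j:ℕ):ℝ) := Nat.cast_nonneg _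
        nlinarith
    _ = (r:ℝ)^3 := by simp [pow_succ]; ring

lemma frob2_spec_mul {N r : ℕ} (A : Matrix (Fin N) (Fin N) ℝ) (U : Matrix (Fin N) (Fin r) ℝ) :
    frob2 (A * U) ≤ spec A ^ 2 * frob2 U := by
  have key : ∀ j : Fin r, ∑ i, ((A * U) i j) ^ 2 ≤ spec A ^ 2 * ∑ i, U i j ^ 2 := by
    intro j
    set x : EuclideanSpace ℝ (Fin N) := (WithLp.equiv 2 (Fin N → ℝ)).symm (fun i => U i j) with hx
    have hAx : (LinearMap.toContinuousLinearMap (Matrix.toEuclideanLin A)) x =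
        (WithLp.equiv 2 (Fin N → ℝ)).symm (A.mulVec fun i => U i j) := by
      simp [hx, Matrix.toEuclideanLin_apply_piLp_toLp]
    have hb := ContinuousLinearMap.le_opNorm
      (LinearMap.toContinuousLinearMap (Matrix.toEuclideanLin A)) x
    rw [hAx] at hb
    have hnx : ‖x‖ = Real.sqrt (∑ i, U i j ^ 2) := by
      rw [EuclideanSpace.norm_eq]
      congr 1; refine Finset.sum_congr rfl fun i _ => ?_
      rw [Real.norm_eq_abs, sq_abs]; rfl
    have hnAx : ‖(WithLp.equiv 2 (Fin N → ℝ)).symm (A.mulVec fun i => U i j)‖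
        = Real.sqrt (∑ i, ((A*U) i j) ^ 2) := by
      rw [EuclideanSpace.norm_eq]
      congr 1; refine Finset.sum_congr rfl fun i _ => ?_
      rw [Real.norm_eq_abs, sq_abs]
      show (A.mulVec fun i => U i j) i ^ 2 = _
      simp [Matrix.mulVec, Matrix.mul_apply, dotProduct]
    rw [hnAx, hnx] at hb
    have h1 : 0 ≤ ∑ i, ((A*U) i j) ^ 2 := Finset.sum_nonneg fun _ _ => sq_nonneg _
    have h2 : 0 ≤ ∑ i, U i j ^ 2 := Finset.sum_nonneg fun _ _ => sq_nonneg _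
    have := mul_self_le_mul_self (Real.sqrt_nonneg _) hb
    rw [Real.mul_self_sqrt h1] at this
    calc ∑ i, ((A*U) i j) ^ 2 ≤ (spec A * Real.sqrt (∑ i, U i j ^ 2)) *
          (spec A * Real.sqrt (∑ i, U i j ^ 2)) := this
      _ = spec A ^ 2 * ∑ i, U i j ^ 2 := by
          rw [mul_mul_mul_comm, Real.mul_self_sqrt h2, sq]
  calc frob2 (A * U) = ∑ j, ∑ i, ((A*U) i j) ^ 2 := by rw [frob2, Finset.sum_comm]
    _ ≤ ∑ j : Fin r, spec A ^ 2 * ∑ i, U i j ^ 2 := Finset.sum_le_sum fun j _ => key j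
    _ = spec A ^ 2 * frob2 U := by
        rw [← Finset.mul_sum, frob2, Finset.sum_comm]

lemma frob2_X {N r : ℕ} (X : Matrix (Fin N) (Fin r) ℝ) (hX : Xᵀ * X = 1) :
    frob2 X = r := by
  have : frob2 X = Matrix.trace (Xᵀ * X) := by
    rw [← tip_self, tip_eq_trace]
  rw [this, hX, Matrix.trace_one]
  simp

/-- uniform Hessian deviation bound, matrix sensing: for symmetric
`Y`, `M`, `Δ = Y − M`, every `X ∈ St(N,r)` and every `U` with `‖U‖_F ≤ 1`,
`|hess f(X)[U,U] − hess g(X)[U,U]| = |⟨Xᵀ Δ X, Uᵀ U N_r⟩ − ⟨Δ, U N_r Uᵀ⟩|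
  ≤ 2 r^{3/2} ‖Y − M‖` (spectral norm). -/
theorem stmt_16 {N r : ℕ} (Y M : Matrix (Fin N) (Fin N) ℝ)
    (hY : Y.IsSymm) (hM : M.IsSymm)
    (X : Matrix (Fin N) (Fin r) ℝ) (hX : Xᵀ * X = 1)
    (U : Matrix (Fin N) (Fin r) ℝ) (hU : Real.sqrt (∑ i, ∑ j, U i j ^ 2) ≤ 1) :
    (tip (Xᵀ * Y * X) (Uᵀ * U * Nr r) - tip Y (U * Nr r * Uᵀ))
      - (tip (Xᵀ * M * X) (Uᵀ * U * Nr r) - tip M (U * Nr r * Uᵀ)) =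
      tip (Xᵀ * (Y - M) * X) (Uᵀ * U * Nr r) - tip (Y - M) (U * Nr r * Uᵀ) ∧
    |tip (Xᵀ * (Y - M) * X) (Uᵀ * U * Nr r) - tip (Y - M) (U * Nr r * Uᵀ)| ≤
      2 * (r : ℝ) ^ ((3 : ℝ)/2) * spec (Y - M) := by
  have e1 : Xᵀ * (Y - M) * X = Xᵀ * Y * X - Xᵀ * M * X := by
    rw [Matrix.mul_sub, Matrix.sub_mul]
  constructor
  · rw [e1, tip_sub_left, tip_sub_left]; ring
  set Δ := Y - M with hΔ
  have hDsymm : Δᵀ = Δ := by rw [hΔ, Matrix.transpose_sub, hY, hM]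
  set s := spec Δ with hs'
  have hs : 0 ≤ s := norm_nonneg _
  have hrn : (0:ℝ) ≤ (r:ℕ) := Nat.cast_nonneg r
  have hU1 : Real.sqrt (frob2 U) ≤ 1 := hU
  have hU2 : frob2 U ≤ 1 := by
    nlinarith [Real.sq_sqrt (frob2_nonneg U), Real.sqrt_nonneg (frob2 U)]
  have hUt : frob2 Uᵀ ≤ 1 := by rw [frob2_transpose]; exact hU2
  -- term 1
  have hA : frob2 (Xᵀ * Δ * X) ≤ s ^ 2 * r := by
    rw [Matrix.mul_assoc]
    calc frob2 (Xᵀ * (Δ * X)) ≤ frob2 (Δ * X) := frob2_transpose_mul_le X hX _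
      _ ≤ s ^ 2 * frob2 X := frob2_spec_mul Δ X
      _ = s ^ 2 * r := by rw [frob2_X X hX]
  have hB : frob2 (Uᵀ * U * Nr r) ≤ (r:ℝ) ^ 2 := by
    calc frob2 (Uᵀ * U * Nr r) ≤ (r:ℝ)^2 * frob2 (Uᵀ * U) := frob2_mul_Nr _
      _ ≤ (r:ℝ)^2 * (frob2 Uᵀ * frob2 U) := by
          have := frob2_mul_le Uᵀ U
          nlinarith [sq_nonneg (r:ℝ)]
      _ ≤ (r:ℝ)^2 * 1 := by
          have hprod : frob2 Uᵀ * frob2 U ≤ 1 :=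
            mul_le_one₀ hUt (frob2_nonneg U) hU2
          exact mul_le_mul_of_nonneg_left hprod (sq_nonneg _)
      _ = (r:ℝ)^2 := mul_one _
  have t1 : |tip (Xᵀ * Δ * X) (Uᵀ * U * Nr r)| ≤ (s * Real.sqrt r) * r := by
    calc |tip (Xᵀ * Δ * X) (Uᵀ * U * Nr r)|
        ≤ Real.sqrt (frob2 (Xᵀ * Δ * X)) * Real.sqrt (frob2 (Uᵀ * U * Nr r)) :=
          abs_tip_le _ _
      _ ≤ Real.sqrt (s^2 * r) * Real.sqrt ((r:ℝ)^2) := by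
          exact mul_le_mul (Real.sqrt_le_sqrt hA) (Real.sqrt_le_sqrt hB)
            (Real.sqrt_nonneg _) (Real.sqrt_nonneg _)
      _ = (s * Real.sqrt r) * r := by
          rw [Real.sqrt_mul (sq_nonneg s), Real.sqrt_sq hs, Real.sqrt_sq hrn]
  -- term 2
  have e2 : tip Δ (U * Nr r * Uᵀ) = tip (Uᵀ * Δ) (Nr r * Uᵀ) := by
    rw [Matrix.mul_assoc, tip_transpose_mul U Δ (Nr r * Uᵀ)]
  have hC : frob2 (Uᵀ * Δ) ≤ s ^ 2 := by
    calc frob2 (Uᵀ * Δ) = frob2 ((Uᵀ * Δ)ᵀ) := (frob2_transpose _).symm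
      _ = frob2 (Δ * U) := by rw [Matrix.transpose_mul, Matrix.transpose_transpose, hDsymm]
      _ ≤ s^2 * frob2 U := frob2_spec_mul Δ U
      _ ≤ s^2 * 1 := by nlinarith [sq_nonneg s, frob2_nonneg U]
      _ = s^2 := mul_one _
  have hD : frob2 (Nr r * Uᵀ) ≤ (r:ℝ)^3 := by
    calc frob2 (Nr r * Uᵀ) ≤ frob2 (Nr r) * frob2 Uᵀ := frob2_mul_le _ _
      _ ≤ (r:ℝ)^3 * 1 := by
          have h1 := frob2_Nr r
          have h2 := frob2_nonneg (Nr r)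
          have h3 := frob2_nonneg Uᵀ
          nlinarith
      _ = (r:ℝ)^3 := mul_one _
  have t2 : |tip Δ (U * Nr r * Uᵀ)| ≤ s * ((r:ℝ) * Real.sqrt r) := by
    rw [e2]
    calc |tip (Uᵀ * Δ) (Nr r * Uᵀ)|
        ≤ Real.sqrt (frob2 (Uᵀ * Δ)) * Real.sqrt (frob2 (Nr r * Uᵀ)) := abs_tip_le _ _
      _ ≤ Real.sqrt (s^2) * Real.sqrt ((r:ℝ)^3) :=
          mul_le_mul (Real.sqrt_le_sqrt hC) (Real.sqrt_le_sqrt hD)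
            (Real.sqrt_nonneg _) (Real.sqrt_nonneg _)
      _ = s * ((r:ℝ) * Real.sqrt r) := by
          rw [Real.sqrt_sq hs]
          congr 1
          rw [show (r:ℝ)^3 = (r:ℝ)^2 * r by ring, Real.sqrt_mul (sq_nonneg _),
            Real.sqrt_sq hrn]
  -- combine
  have hr32 : (r:ℝ) ^ ((3:ℝ)/2) = (r:ℝ) * Real.sqrt r := by
    rw [show (3:ℝ)/2 = (3:ℝ) * (1/2) by ring, Real.rpow_mul hrn,
      show (3:ℝ) = ((3:ℕ):ℝ) by norm_num, Real.rpow_natCast, ← Real.sqrt_eq_rpow,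
      show (r:ℝ)^(3:ℕ) = (r:ℝ)^2 * r by ring, Real.sqrt_mul (sq_nonneg _),
      Real.sqrt_sq hrn]
  rw [hr32]
  calc |tip (Xᵀ * Δ * X) (Uᵀ * U * Nr r) - tip Δ (U * Nr r * Uᵀ)|
      ≤ |tip (Xᵀ * Δ * X) (Uᵀ * U * Nr r)| + |tip Δ (U * Nr r * Uᵀ)| := abs_sub _ _
    _ ≤ (s * Real.sqrt r) * r + s * ((r:ℝ) * Real.sqrt r) := add_le_add t1 t2
    _ = 2 * ((r:ℝ) * Real.sqrt r) * s := by ring
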